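/- Let H be a real Hilbert space, I = {1,...,n}, μ > 0, and for each i ∈ I let λ_i > 0 with Σ_{i∈I} λ_i = 1, let ε_i ≥ 0 be a real number, and let A_i : H ⇉ H be maximally monotone and ε_i-monotone. Then R_μ(A, λ) is ε-monotone, where ε = (Σ_{i∈I} λ_i (ε_i + μ⁻¹)⁻¹)⁻¹ − μ⁻¹. In particular, if there exists i₀ ∈ I such that ε_{i₀} > 0, then ε > 0, so R_μ(A, λ) is strongly monotone with constant ε. -/
import Mathlib


open RealInnerProductSpace

namespace SVP

variable {H : Type*} [NormedAddCommGroup H] [InnerProductSpace ℝ H]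

/-- Inverse of a set-valued mapping: `x ∈ inv A u ↔ u ∈ A x`. -/
def inv (A : H → Set H) : H → Set H := fun u => {x | u ∈ A x}

/-- Pointwise (Minkowski) sum of two set-valued mappings. -/
def add (A B : H → Set H) : H → Set H := fun x => {w | ∃ u ∈ A x, ∃ v ∈ B x, w = u + v}

/-- Pointwise difference of two set-valued mappings. -/
def sub (A B : H → Set H) : H → Set H := fun x => {w | ∃ u ∈ A x, ∃ v ∈ B x, w = u - v}

/-- Pointwise scalar multiple of a set-valued mapping. -/
def smul (c : ℝ) (A : H → Set H) : H → Set H := fun x => (fun u => c • u) '' A x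

/-- The identity as a set-valued mapping. -/
def id' : H → Set H := fun x => {x}

/-- Composition of set-valued mappings: `(comp A B) x = ⋃ y ∈ B x, A y`. -/
def comp (A B : H → Set H) : H → Set H := fun x => ⋃ y ∈ B x, A y

/-- Weighted pointwise (Minkowski) combination `Σ_i lam i • (B i)`. -/
def lcomb {n : ℕ} (lam : Fin n → ℝ) (B : Fin n → H → Set H) : H → Set H :=
  fun x => {u | ∃ v : Fin n → H, (∀ i, v i ∈ B i x) ∧ u = ∑ i, lam i • v i}

/-- The `λ`-weighted resolvent average with parameter `μ`:
`R_μ(A, λ) = (Σ_i λ_i (A_i + μ⁻¹ Id)⁻¹)⁻¹ − μ⁻¹ Id`. -/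
def resAvg {n : ℕ} (μ : ℝ) (lam : Fin n → ℝ) (A : Fin n → H → Set H) : H → Set H :=
  sub (inv (lcomb lam (fun i => inv (add (A i) (smul μ⁻¹ id'))))) (smul μ⁻¹ id')

/-- Monotonicity of a set-valued mapping. -/
def IsMonotone (A : H → Set H) : Prop :=
  ∀ ⦃x y u v : H⦄, u ∈ A x → v ∈ A y → 0 ≤ ⟪x - y, u - v⟫

/-- Maximal monotonicity: the graph is not properly contained in the graph of
another monotone mapping. -/
def IsMaxMonotone (A : H → Set H) : Prop :=
  IsMonotone A ∧ ∀ B : H → Set H, IsMonotone B → (∀ x, A x ⊆ B x) → ∀ x, B x ⊆ A x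

/-- Domain of a set-valued mapping. -/
def dom (A : H → Set H) : Set H := {x | (A x).Nonempty}

/-- Range of a set-valued mapping. -/
def ran (A : H → Set H) : Set H := {u | ∃ x, u ∈ A x}

/-- Graph of a set-valued mapping. -/
def graph (A : H → Set H) : Set (H × H) := {p | p.2 ∈ A p.1}

end SVP

variable {H : Type*} [NormedAddCommGroup H] [InnerProductSpace ℝ H] [CompleteSpace H]

/-- `A` is `ε`-monotone if `ε‖x − y‖² ≤ ⟪x − y, u − v⟫` whenever `u ∈ A x`, `v ∈ A y`. -/
def IsEpsMonotone (ε : ℝ) (A : H → Set H) : Prop :=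
  ∀ ⦃x y u v : H⦄, u ∈ A x → v ∈ A y → ε * ‖x - y‖ ^ 2 ≤ ⟪x - y, u - v⟫

lemma resAvg_mem' {n : ℕ} {μ : ℝ} {lam : Fin n → ℝ} {A : Fin n → H → Set H} {x w : H}
    (h : w ∈ SVP.resAvg μ lam A x) :
    ∃ (u : H) (v : Fin n → H), (∀ i, u - μ⁻¹ • v i ∈ A i (v i)) ∧
      x = ∑ i, lam i • v i ∧ w = u - μ⁻¹ • x := by
  obtain ⟨u, hu, z, hz, rfl⟩ := h
  obtain ⟨v, hv, hx⟩ := hu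
  obtain ⟨p, hp, rfl⟩ := hz
  have hp' : p = x := hp
  subst hp'
  refine ⟨u, v, fun i => ?_, hx, rfl⟩
  obtain ⟨a, ha, b, hb, hab⟩ := hv i
  obtain ⟨q, hq, rfl⟩ := hb
  have hq' : q = v i := hq
  subst hq'
  have : u - μ⁻¹ • v i = a := by rw [hab]; abel
  rw [this]; exact ha

lemma key_ineq {n : ℕ} (hn : 0 < n) {μ : ℝ} (hμ : 0 < μ) (lam : Fin n → ℝ)
    (hpos : ∀ i, 0 < lam i) (eps : Fin n → ℝ) (heps : ∀ i, 0 ≤ eps i)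
    (d : Fin n → H) (e : H)
    (hd : ∀ i, (eps i + μ⁻¹) * ‖d i‖ ^ 2 ≤ ⟪d i, e⟫) :
    (∑ i, lam i * (eps i + μ⁻¹)⁻¹)⁻¹ * ‖∑ i, lam i • d i‖ ^ 2 ≤ ⟪∑ i, lam i • d i, e⟫ := by
  set c : Fin n → ℝ := fun i => eps i + μ⁻¹ with hc_def
  have hc : ∀ i, 0 < c i := fun i => add_pos_of_nonneg_of_pos (heps i) (inv_pos.2 hμ)
  set S : ℝ := ∑ i, lam i * (c i)⁻¹ with hS_def
  have hS : 0 < S := Finset.sum_pos (fun i _ => mul_pos (hpos i) (inv_pos.2 (hc i)))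
    (Finset.univ_nonempty_iff.2 (Fin.pos_iff_nonempty.1 hn))
  set T : ℝ := ∑ i, lam i * c i * ‖d i‖ ^ 2 with hT_def
  have hA : T ≤ ⟪∑ i, lam i • d i, e⟫ := by
    rw [sum_inner]
    refine Finset.sum_le_sum fun i _ => ?_
    rw [real_inner_smul_left]
    have := mul_le_mul_of_nonneg_left (hd i) (hpos i).le
    calc lam i * c i * ‖d i‖ ^ 2 = lam i * (c i * ‖d i‖ ^ 2) := by ring
      _ ≤ lam i * ⟪d i, e⟫ := this
  have hB : ‖∑ i, lam i • d i‖ ≤ ∑ i, lam i * ‖d i‖ := by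
    refine (norm_sum_le _ _).trans_eq ?_
    refine Finset.sum_congr rfl fun i _ => ?_
    rw [norm_smul, Real.norm_eq_abs, abs_of_pos (hpos i)]
  have hC : (∑ i, lam i * ‖d i‖) ^ 2 ≤ S * T := by
    have := Finset.sum_mul_sq_le_sq_mul_sq Finset.univ
      (fun i => Real.sqrt (lam i * (c i)⁻¹)) (fun i => Real.sqrt (lam i * c i) * ‖d i‖)
    have e1 : ∀ i, Real.sqrt (lam i * (c i)⁻¹) * (Real.sqrt (lam i * c i) * ‖d i‖)
        = lam i * ‖d i‖ := by
      intro i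
      rw [← mul_assoc, ← Real.sqrt_mul (mul_nonneg (hpos i).le (inv_pos.2 (hc i)).le)]
      have h1 : lam i * (c i)⁻¹ * (lam i * c i) = lam i ^ 2 * ((c i)⁻¹ * c i) := by ring
      rw [h1, inv_mul_cancel₀ (hc i).ne', mul_one, Real.sqrt_sq (hpos i).le]
    have e2 : ∀ i, Real.sqrt (lam i * (c i)⁻¹) ^ 2 = lam i * (c i)⁻¹ := fun i =>
      Real.sq_sqrt (mul_nonneg (hpos i).le (inv_pos.2 (hc i)).le)
    have e3 : ∀ i, (Real.sqrt (lam i * c i) * ‖d i‖) ^ 2 = lam i * c i * ‖d i‖ ^ 2 := by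
      intro i
      rw [mul_pow, Real.sq_sqrt (mul_nonneg (hpos i).le (hc i).le)]
    simp only [e1, e2, e3] at this
    exact this
  have hB2 : ‖∑ i, lam i • d i‖ ^ 2 ≤ (∑ i, lam i * ‖d i‖) ^ 2 := by
    have h0 : (0:ℝ) ≤ ‖∑ i, lam i • d i‖ := norm_nonneg _
    exact pow_le_pow_left₀ h0 hB 2
  have : ‖∑ i, lam i • d i‖ ^ 2 ≤ S * ⟪∑ i, lam i • d i, e⟫ := by
    calc ‖∑ i, lam i • d i‖ ^ 2 ≤ S * T := hB2.trans hC
      _ ≤ S * ⟪∑ i, lam i • d i, e⟫ := by nlinarith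
  rw [inv_mul_le_iff₀ hS]
  exact this

/-- Strong monotonicity is dominant: if each `Aᵢ` is `εᵢ`-monotone, then
`R_μ(A,λ)` is `ε`-monotone with `ε = (Σᵢ λᵢ(εᵢ + μ⁻¹)⁻¹)⁻¹ − μ⁻¹`; in
particular, `ε > 0` as soon as some `ε_{i₀} > 0`. -/
theorem stmt13 {n : ℕ} (hn : 0 < n) {μ : ℝ} (hμ : 0 < μ) (lam : Fin n → ℝ)
    (hpos : ∀ i, 0 < lam i) (hsum : ∑ i, lam i = 1) (eps : Fin n → ℝ)
    (heps : ∀ i, 0 ≤ eps i) (A : Fin n → H → Set H)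
    (hA : ∀ i, SVP.IsMaxMonotone (A i)) (hmono : ∀ i, IsEpsMonotone (eps i) (A i)) :
    IsEpsMonotone ((∑ i, lam i * (eps i + μ⁻¹)⁻¹)⁻¹ - μ⁻¹) (SVP.resAvg μ lam A) ∧
    ((∃ i₀, 0 < eps i₀) → 0 < (∑ i, lam i * (eps i + μ⁻¹)⁻¹)⁻¹ - μ⁻¹) := by
  constructor
  · intro x y w w' hw hw'
    obtain ⟨u, v, hu, hx, rfl⟩ := resAvg_mem' hw
    obtain ⟨u', v', hu', hy, rfl⟩ := resAvg_mem' hw'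
    set d : Fin n → H := fun i => v i - v' i with hd_def
    have hxy : x - y = ∑ i, lam i • d i := by
      rw [hx, hy, ← Finset.sum_sub_distrib]
      exact Finset.sum_congr rfl fun i _ => (smul_sub _ _ _).symm
    have hd : ∀ i, (eps i + μ⁻¹) * ‖d i‖ ^ 2 ≤ ⟪d i, u - u'⟫ := by
      intro i
      have h1 := hmono i (hu i) (hu' i)
      have h2 : (u - μ⁻¹ • v i) - (u' - μ⁻¹ • v' i) = (u - u') - μ⁻¹ • d i := by
        simp only [hd_def, smul_sub]; abel
      rw [h2, inner_sub_right, real_inner_smul_right, real_inner_self_eq_norm_sq] at h1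
      have : v i - v' i = d i := rfl
      rw [this] at h1
      linarith
    have hkey := key_ineq hn hμ lam hpos eps heps d (u - u') hd
    rw [← hxy] at hkey
    have hgoal : (u - μ⁻¹ • x) - (u' - μ⁻¹ • y) = (u - u') - μ⁻¹ • (x - y) := by
      simp only [smul_sub]; abel
    rw [hgoal, inner_sub_right, real_inner_smul_right, real_inner_self_eq_norm_sq]
    nlinarith [hkey]
  · rintro ⟨i₀, hi₀⟩
    have hc : ∀ i, 0 < eps i + μ⁻¹ := fun i => add_pos_of_nonneg_of_pos (heps i) (inv_pos.2 hμ)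
    have hS : 0 < ∑ i, lam i * (eps i + μ⁻¹)⁻¹ :=
      Finset.sum_pos (fun i _ => mul_pos (hpos i) (inv_pos.2 (hc i)))
        (Finset.univ_nonempty_iff.2 (Fin.pos_iff_nonempty.1 hn))
    have hlt : ∑ i, lam i * (eps i + μ⁻¹)⁻¹ < μ := by
      calc ∑ i, lam i * (eps i + μ⁻¹)⁻¹ < ∑ i, lam i * μ := by
            refine Finset.sum_lt_sum (fun i _ => ?_) ⟨i₀, Finset.mem_univ _, ?_⟩
            · refine mul_le_mul_of_nonneg_left ?_ (hpos i).le
              rw [inv_le_comm₀ (hc i) hμ]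
              have := heps i
              nlinarith
            · refine mul_lt_mul_of_pos_left ?_ (hpos i₀)
              rw [inv_lt_comm₀ (hc i₀) hμ]
              nlinarith
        _ = μ := by rw [← Finset.sum_mul, hsum, one_mul]
    have : μ⁻¹ < (∑ i, lam i * (eps i + μ⁻¹)⁻¹)⁻¹ := by
      exact inv_strictAnti₀ hS hlt
    linarith
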